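/- arXiv:2308.12240 — 3 statements merged into one kernel-verified Lean document; each statement's English description precedes it below -/
import Mathlib

section
/- Let p₀ be a probability density on ℝ^d and for t > 0 define p_t(x) = ∫ p₀(y) q_t(y,x) dy, where q_t is the Ornstein–Uhlenbeck transition kernel. Then for every t > 0 and x ∈ ℝ^d the Fokker–Planck equation holds: ∂_t p_t(x) = div(x ↦ x · p_t(x))(x) + Δ p_t(x), i.e. ∂_t p_t(x) = d · p_t(x) + ⟨x, ∇p_t(x)⟩ + Δ p_t(x), where ∇, div and Δ are taken in the space variable x. -/
open MeasureTheory Real Set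
open scoped RealInnerProductSpace

set_option maxHeartbeats 1000000
set_option synthInstance.maxHeartbeats 400000

noncomputable section

/-- The standard Gaussian density on `ℝ^d`. -/
def gaussDensity (d : ℕ) (x : EuclideanSpace ℝ (Fin d)) : ℝ :=
  (2 * π) ^ (-(d : ℝ) / 2) * Real.exp (-‖x‖ ^ 2 / 2)

/-- The Ornstein–Uhlenbeck transition kernel `q_t(y, x)` on `ℝ^d`, for `t > 0`. -/
def ouKernel (d : ℕ) (t : ℝ) (y x : EuclideanSpace ℝ (Fin d)) : ℝ :=
  (2 * π * (1 - Real.exp (-2 * t))) ^ (-(d : ℝ) / 2) *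
    Real.exp (-‖x - Real.exp (-t) • y‖ ^ 2 / (2 * (1 - Real.exp (-2 * t))))

/-- The OU marginal densities `p_t(x) = ∫ p₀(y) q_t(y,x) dy`. -/
def ouMarginal (d : ℕ) (p₀ : EuclideanSpace ℝ (Fin d) → ℝ) (t : ℝ)
    (x : EuclideanSpace ℝ (Fin d)) : ℝ :=
  ∫ y, p₀ y * ouKernel d t y x

/-- The Laplacian (in the space variable) of `f : ℝ^d → ℝ`. -/
def laplacian (d : ℕ) (f : EuclideanSpace ℝ (Fin d) → ℝ) (x : EuclideanSpace ℝ (Fin d)) : ℝ :=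
  ∑ i : Fin d,
    fderiv ℝ (fun y => fderiv ℝ f y (EuclideanSpace.single i 1)) x (EuclideanSpace.single i 1)

/-! ### Auxiliary scalar bounds -/

lemma gauss_bd0 {s r : ℝ} (hs0 : 0 < s) :
    Real.exp (-r ^ 2 / (2 * s)) ≤ 1 :=
  Real.exp_le_one_iff.mpr
    (div_nonpos_of_nonpos_of_nonneg (neg_nonpos.mpr (by positivity)) (by positivity))

lemma gauss_key {s r : ℝ} (hs0 : 0 < s) (hs1 : s ≤ 1) :
    1 + r ^ 2 / 2 ≤ Real.exp (r ^ 2 / (2 * s)) := by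
  have h1 : r ^ 2 / 2 ≤ r ^ 2 / (2 * s) :=
    div_le_div_of_nonneg_left (by positivity) (by positivity) (by linarith)
  have := Real.add_one_le_exp (r ^ 2 / (2 * s)); linarith

lemma gauss_bd1 {s r : ℝ} (hs0 : 0 < s) (hs1 : s ≤ 1) (hr : 0 ≤ r) :
    r * Real.exp (-r ^ 2 / (2 * s)) ≤ 1 := by
  have h2 := gauss_key (r := r) hs0 hs1
  have hr' : r ≤ Real.exp (r ^ 2 / (2 * s)) := by nlinarith
  calc r * Real.exp (-r ^ 2 / (2 * s))
      ≤ Real.exp (r ^ 2 / (2 * s)) * Real.exp (-r ^ 2 / (2 * s)) :=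
        mul_le_mul_of_nonneg_right hr' (Real.exp_nonneg _)
    _ = 1 := by rw [← Real.exp_add, neg_div, add_neg_cancel, Real.exp_zero]

lemma gauss_bd2 {s r : ℝ} (hs0 : 0 < s) (hs1 : s ≤ 1) :
    r ^ 2 * Real.exp (-r ^ 2 / (2 * s)) ≤ 2 := by
  have h2 := gauss_key (r := r) hs0 hs1
  have hr' : r ^ 2 ≤ 2 * Real.exp (r ^ 2 / (2 * s)) := by nlinarith
  calc r ^ 2 * Real.exp (-r ^ 2 / (2 * s))
      ≤ (2 * Real.exp (r ^ 2 / (2 * s))) * Real.exp (-r ^ 2 / (2 * s)) :=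
        mul_le_mul_of_nonneg_right hr' (Real.exp_nonneg _)
    _ = 2 := by rw [mul_assoc, ← Real.exp_add, neg_div, add_neg_cancel, Real.exp_zero, mul_one]

/-! ### Pointwise derivative computations for Gaussian functions -/

variable {E : Type*} [NormedAddCommGroup E] [InnerProductSpace ℝ E]

lemma hasFDerivAt_gauss (A s : ℝ) (v x : E) :
    HasFDerivAt (fun z : E => A * Real.exp (-‖z - v‖ ^ 2 / (2 * s)))
      ((A * Real.exp (-‖x - v‖ ^ 2 / (2 * s)) * (-s⁻¹)) • innerSL ℝ (x - v)) x := by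
  have h1 : HasFDerivAt (fun z : E => ‖z - v‖ ^ 2) (2 • innerSL ℝ (x - v)) x := by
    simpa using ((hasFDerivAt_id x).sub_const v).norm_sq
  have h2 : HasFDerivAt (fun z : E => -‖z - v‖ ^ 2 / (2 * s))
      ((-(2 * s)⁻¹) • (2 • innerSL ℝ (x - v))) x := by
    have := h1.const_mul (-(2 * s)⁻¹)
    simpa [neg_div, div_eq_inv_mul, mul_comm] using this
  have h3 := (h2.exp).const_mul A
  refine h3.congr_fderiv ?_
  ext w
  simp [ContinuousLinearMap.smul_apply, smul_smul]
  ring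

lemma hasFDerivAt_inner_sub (v e x : E) :
    HasFDerivAt (fun z : E => (⟪z - v, e⟫ : ℝ)) (innerSL ℝ e) x := by
  have h := ((innerSL ℝ e).hasFDerivAt (x := x - v)).comp x ((hasFDerivAt_id x).sub_const v)
  have heq : (fun z : E => (⟪z - v, e⟫ : ℝ)) = fun z => innerSL ℝ e (z - v) := by
    funext z; simp [real_inner_comm]
  rw [heq]
  exact h

lemma hasFDerivAt_gauss_inner (A s : ℝ) (v e x : E) :
    HasFDerivAt (fun z : E => A * Real.exp (-‖z - v‖ ^ 2 / (2 * s)) * (-s⁻¹) * ⟪z - v, e⟫)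
      ((A * Real.exp (-‖x - v‖ ^ 2 / (2 * s)) * (-s⁻¹)) • innerSL ℝ e
        + (A * Real.exp (-‖x - v‖ ^ 2 / (2 * s)) * (-s⁻¹) * (-s⁻¹) * ⟪x - v, e⟫) •
          innerSL ℝ (x - v)) x := by
  have hg := (hasFDerivAt_gauss A s v x).mul_const (-s⁻¹)
  have h := hg.mul (hasFDerivAt_inner_sub v e x)
  refine h.congr_fderiv ?_
  ext w
  simp only [ContinuousLinearMap.add_apply, ContinuousLinearMap.smul_apply, innerSL_apply_apply,
    smul_eq_mul]
  ring

/-! ### OU kernel abbreviations -/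

/-- `s(t) = 1 - e^{-2t}`, the variance parameter. -/
def ouS (t : ℝ) : ℝ := 1 - Real.exp (-2 * t)

/-- normalization constant of the OU kernel -/
def ouA (d : ℕ) (t : ℝ) : ℝ := (2 * π * ouS t) ^ (-(d : ℝ) / 2)

lemma ouS_pos {t : ℝ} (ht : 0 < t) : 0 < ouS t := by
  have : Real.exp (-2 * t) < 1 := Real.exp_lt_one_iff.mpr (by linarith)
  simp only [ouS]; linarith

lemma ouS_le_one (t : ℝ) : ouS t ≤ 1 := by
  have := Real.exp_pos (-2 * t); simp only [ouS]; linarith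

lemma ouS_mono {t₁ t₂ : ℝ} (h : t₁ ≤ t₂) : ouS t₁ ≤ ouS t₂ := by
  have : Real.exp (-2 * t₂) ≤ Real.exp (-2 * t₁) := Real.exp_le_exp.mpr (by linarith)
  simp only [ouS]; linarith

lemma ouA_pos (d : ℕ) {t : ℝ} (ht : 0 < t) : 0 < ouA d t :=
  Real.rpow_pos_of_pos (by have := ouS_pos ht; have := Real.pi_pos; positivity) _

lemma ouA_anti (d : ℕ) {t₁ t₂ : ℝ} (ht₁ : 0 < t₁) (h : t₁ ≤ t₂) : ouA d t₂ ≤ ouA d t₁ := by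
  apply Real.rpow_le_rpow_of_nonpos
  · have := ouS_pos ht₁; have := Real.pi_pos; positivity
  · have := ouS_mono h; nlinarith [Real.pi_pos]
  · have : (0:ℝ) ≤ (d:ℝ) := Nat.cast_nonneg d
    linarith [neg_div (2:ℝ) (d:ℝ)]

lemma ouKernel_eq (d : ℕ) (t : ℝ) (y x : EuclideanSpace ℝ (Fin d)) :
    ouKernel d t y x
      = ouA d t * Real.exp (-‖x - Real.exp (-t) • y‖ ^ 2 / (2 * ouS t)) := rfl

lemma ouKernel_nonneg (d : ℕ) {t : ℝ} (ht : 0 < t) (y x : EuclideanSpace ℝ (Fin d)) :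
    0 ≤ ouKernel d t y x := by
  rw [ouKernel_eq]
  have := ouA_pos d ht
  positivity

lemma ouKernel_le (d : ℕ) {t : ℝ} (ht : 0 < t) (y x : EuclideanSpace ℝ (Fin d)) :
    ouKernel d t y x ≤ ouA d t := by
  rw [ouKernel_eq]
  calc ouA d t * Real.exp (-‖x - Real.exp (-t) • y‖ ^ 2 / (2 * ouS t))
      ≤ ouA d t * 1 := by
        apply mul_le_mul_of_nonneg_left (gauss_bd0 (ouS_pos ht)) (ouA_pos d ht).le
    _ = ouA d t := mul_one _
/-! ### Derivatives of the OU kernel -/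

/-- the spatial derivative of the OU kernel -/
def ouG (d : ℕ) (t : ℝ) (y z : EuclideanSpace ℝ (Fin d)) :
    EuclideanSpace ℝ (Fin d) →L[ℝ] ℝ :=
  (ouKernel d t y z * (-(ouS t)⁻¹)) • innerSL ℝ (z - Real.exp (-t) • y)

/-- the second spatial derivative of the OU kernel in direction `e` -/
def ouH (d : ℕ) (t : ℝ) (y z e : EuclideanSpace ℝ (Fin d)) :
    EuclideanSpace ℝ (Fin d) →L[ℝ] ℝ :=
  (ouKernel d t y z * (-(ouS t)⁻¹)) • innerSL ℝ e
    + (ouKernel d t y z * (-(ouS t)⁻¹) * (-(ouS t)⁻¹) * ⟪z - Real.exp (-t) • y, e⟫) •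
      innerSL ℝ (z - Real.exp (-t) • y)

/-- the time derivative of the OU kernel -/
def ouDt (d : ℕ) (t : ℝ) (y x : EuclideanSpace ℝ (Fin d)) : ℝ :=
  ouKernel d t y x *
    (Real.exp (-t) ^ 2 * (-(d : ℝ) / ouS t + ‖x - Real.exp (-t) • y‖ ^ 2 / ouS t ^ 2)
      - ⟪x - Real.exp (-t) • y, Real.exp (-t) • y⟫ / ouS t)

lemma ouKernel_hasFDerivAt (d : ℕ) (t : ℝ) (y x : EuclideanSpace ℝ (Fin d)) :
    HasFDerivAt (fun z => ouKernel d t y z) (ouG d t y x) x :=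
  hasFDerivAt_gauss (ouA d t) (ouS t) (Real.exp (-t) • y) x

lemma ouKernel_hasFDerivAt2 (d : ℕ) (t : ℝ) (y x e : EuclideanSpace ℝ (Fin d)) :
    HasFDerivAt (fun z => ouKernel d t y z * (-(ouS t)⁻¹) * ⟪z - Real.exp (-t) • y, e⟫)
      (ouH d t y x e) x :=
  hasFDerivAt_gauss_inner (ouA d t) (ouS t) (Real.exp (-t) • y) e x

lemma ouG_norm_le (d : ℕ) {t : ℝ} (ht : 0 < t) (y z : EuclideanSpace ℝ (Fin d)) :
    ‖ouG d t y z‖ ≤ ouA d t * (ouS t)⁻¹ := by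
  have hs := ouS_pos ht
  have hA := ouA_pos d ht
  have hns := norm_smul (α := ℝ) (β := EuclideanSpace ℝ (Fin d) →L[ℝ] ℝ)
    (ouKernel d t y z * (-(ouS t)⁻¹)) (innerSL ℝ (z - Real.exp (-t) • y))
  rw [ouG, hns, innerSL_apply_norm]
  have h1 : |ouKernel d t y z * (-(ouS t)⁻¹)| = ouKernel d t y z * (ouS t)⁻¹ := by
    rw [abs_mul, abs_of_nonneg (ouKernel_nonneg d ht y z), abs_neg,
      abs_of_nonneg (by positivity)]
  rw [Real.norm_eq_abs, h1, ouKernel_eq]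
  have := gauss_bd1 (r := ‖z - Real.exp (-t) • y‖) hs (ouS_le_one t) (norm_nonneg _)
  calc ouA d t * Real.exp (-‖z - Real.exp (-t) • y‖ ^ 2 / (2 * ouS t)) * (ouS t)⁻¹ *
        ‖z - Real.exp (-t) • y‖
      = ouA d t * (ouS t)⁻¹ *
          (‖z - Real.exp (-t) • y‖ * Real.exp (-‖z - Real.exp (-t) • y‖ ^ 2 / (2 * ouS t))) := by
        ring
    _ ≤ ouA d t * (ouS t)⁻¹ * 1 := by
        apply mul_le_mul_of_nonneg_left this (by positivity)
    _ = ouA d t * (ouS t)⁻¹ := mul_one _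

lemma ouH_norm_le (d : ℕ) {t : ℝ} (ht : 0 < t) (y z e : EuclideanSpace ℝ (Fin d))
    (he : ‖e‖ = 1) :
    ‖ouH d t y z e‖ ≤ ouA d t * (ouS t)⁻¹ + 2 * ouA d t * ((ouS t)⁻¹ * (ouS t)⁻¹) := by
  have hs := ouS_pos ht
  have hA := ouA_pos d ht
  set u := z - Real.exp (-t) • y with hu
  set Q := ouKernel d t y z with hQ
  have hQ0 : 0 ≤ Q := ouKernel_nonneg d ht y z
  have hrE : ‖u‖ ^ 2 * Real.exp (-‖u‖ ^ 2 / (2 * ouS t)) ≤ 2 :=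
    gauss_bd2 hs (ouS_le_one t)
  have hQA : Q ≤ ouA d t := ouKernel_le d ht y z
  have hinner : |(⟪u, e⟫ : ℝ)| ≤ ‖u‖ := by
    calc |(⟪u, e⟫ : ℝ)| ≤ ‖u‖ * ‖e‖ := abs_real_inner_le_norm u e
    _ = ‖u‖ := by rw [he, mul_one]
  have e1 : |Q * (-(ouS t)⁻¹)| = Q * (ouS t)⁻¹ := by
    rw [abs_mul, abs_of_nonneg hQ0, abs_neg, abs_of_nonneg (inv_nonneg.mpr hs.le)]
  have e2 : |Q * (-(ouS t)⁻¹) * (-(ouS t)⁻¹) * ⟪u, e⟫|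
      = Q * (ouS t)⁻¹ * (ouS t)⁻¹ * |(⟪u, e⟫ : ℝ)| := by
    rw [abs_mul, abs_mul, e1, abs_neg, abs_of_nonneg (inv_nonneg.mpr hs.le)]
  have hQu : Q * ‖u‖ * ‖u‖ ≤ 2 * ouA d t := by
    calc Q * ‖u‖ * ‖u‖
        = ouA d t * (‖u‖ ^ 2 * Real.exp (-‖u‖ ^ 2 / (2 * ouS t))) := by
          rw [hQ, ouKernel_eq, ← hu]; ring
      _ ≤ ouA d t * 2 := mul_le_mul_of_nonneg_left hrE hA.le
      _ = 2 * ouA d t := by ring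
  calc ‖ouH d t y z e‖
      ≤ ‖(Q * (-(ouS t)⁻¹)) • innerSL ℝ e‖
          + ‖(Q * (-(ouS t)⁻¹) * (-(ouS t)⁻¹) * ⟪u, e⟫) • innerSL ℝ u‖ := norm_add_le _ _
    _ = |Q * (-(ouS t)⁻¹)| * ‖e‖
          + |Q * (-(ouS t)⁻¹) * (-(ouS t)⁻¹) * ⟪u, e⟫| * ‖u‖ := by
        have hns1 := norm_smul (α := ℝ) (β := EuclideanSpace ℝ (Fin d) →L[ℝ] ℝ)
          (Q * (-(ouS t)⁻¹)) (innerSL ℝ e)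
        have hns2 := norm_smul (α := ℝ) (β := EuclideanSpace ℝ (Fin d) →L[ℝ] ℝ)
          (Q * (-(ouS t)⁻¹) * (-(ouS t)⁻¹) * ⟪u, e⟫) (innerSL ℝ u)
        rw [hns1, hns2, innerSL_apply_norm, innerSL_apply_norm, Real.norm_eq_abs,
          Real.norm_eq_abs]
    _ = Q * (ouS t)⁻¹ + Q * (ouS t)⁻¹ * (ouS t)⁻¹ * |(⟪u, e⟫ : ℝ)| * ‖u‖ := by
        rw [e1, e2, he, mul_one]
    _ ≤ ouA d t * (ouS t)⁻¹ + 2 * ouA d t * ((ouS t)⁻¹ * (ouS t)⁻¹) := by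
        have t1 : Q * (ouS t)⁻¹ ≤ ouA d t * (ouS t)⁻¹ := by gcongr
        have t2 : Q * (ouS t)⁻¹ * (ouS t)⁻¹ * |(⟪u, e⟫ : ℝ)| * ‖u‖
            ≤ 2 * ouA d t * ((ouS t)⁻¹ * (ouS t)⁻¹) := by
          calc Q * (ouS t)⁻¹ * (ouS t)⁻¹ * |(⟪u, e⟫ : ℝ)| * ‖u‖
              ≤ Q * (ouS t)⁻¹ * (ouS t)⁻¹ * ‖u‖ * ‖u‖ := by gcongr
            _ = (Q * ‖u‖ * ‖u‖) * ((ouS t)⁻¹ * (ouS t)⁻¹) := by ring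
            _ ≤ (2 * ouA d t) * ((ouS t)⁻¹ * (ouS t)⁻¹) := by
                apply mul_le_mul_of_nonneg_right hQu (by positivity)
            _ = 2 * ouA d t * ((ouS t)⁻¹ * (ouS t)⁻¹) := rfl
        linarith
lemma ouKernel_hasDerivAt (d : ℕ) {t : ℝ} (ht : 0 < t) (y x : EuclideanSpace ℝ (Fin d)) :
    HasDerivAt (fun τ => ouKernel d τ y x) (ouDt d t y x) t := by
  have hπ := Real.pi_pos
  have hs : 0 < 1 - Real.exp (-2 * t) := ouS_pos ht
  have h2πs : (0:ℝ) < 2 * π * (1 - Real.exp (-2 * t)) := by positivity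
  have h2s : (0:ℝ) < 2 * (1 - Real.exp (-2 * t)) := by positivity
  have h1 : HasDerivAt (fun τ : ℝ => Real.exp (-2 * τ)) (Real.exp (-2 * t) * -2) t := by
    simpa using ((hasDerivAt_id t).const_mul (-2 : ℝ)).exp
  have h2 : HasDerivAt (fun τ : ℝ => 2 * π * (1 - Real.exp (-2 * τ)))
      (2 * π * -(Real.exp (-2 * t) * -2)) t := (h1.const_sub 1).const_mul (2 * π)
  have h3 := h2.rpow_const (p := -(d : ℝ) / 2) (Or.inl (ne_of_gt h2πs))
  have h4 : HasDerivAt (fun τ : ℝ => Real.exp (-τ)) (Real.exp (-t) * -1) t := by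
    simpa using ((hasDerivAt_id t).neg).exp
  have h5 : HasDerivAt (fun τ : ℝ => x - Real.exp (-τ) • y)
      (-((Real.exp (-t) * -1) • y)) t := (h4.smul_const y).const_sub x
  have h6 := h5.norm_sq
  have h7 := h6.neg
  have h8 : HasDerivAt (fun τ : ℝ => 2 * (1 - Real.exp (-2 * τ)))
      (2 * -(Real.exp (-2 * t) * -2)) t := (h1.const_sub 1).const_mul 2
  have h9 := h7.div h8 (ne_of_gt h2s)
  have h10 := h9.exp
  have h11 := h3.mul h10
  refine h11.congr_deriv ?_
  have hexp2 : Real.exp (-2 * t) = Real.exp (-t) ^ 2 := by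
    rw [show (-2 : ℝ) * t = -t + -t by ring, Real.exp_add, sq]
  have hrpow : (2 * π * (1 - Real.exp (-2 * t))) ^ (-(d : ℝ) / 2 - 1)
      = (2 * π * (1 - Real.exp (-2 * t))) ^ (-(d : ℝ) / 2)
        / (2 * π * (1 - Real.exp (-2 * t))) := by
    rw [Real.rpow_sub h2πs, Real.rpow_one]
  simp only [Pi.neg_apply, Pi.div_apply, ouDt, ouKernel_eq, ouA, ouS, inner_neg_right, inner_smul_right,
    inner_sub_left, real_inner_smul_left, real_inner_self_eq_norm_sq, hexp2]
  rw [hexp2] at hrpow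
  rw [hrpow]
  have ha2 : (1 : ℝ) - Real.exp (-t) ^ 2 ≠ 0 := by rw [← hexp2]; exact hs.ne'
  field_simp [ha2, Real.pi_ne_zero]
  ring
lemma aux_j1 {a D R : ℝ} (ha0 : 0 ≤ a) (ha1 : a ≤ 1) (hD : 0 ≤ D) (hR : 0 ≤ R) :
    a * (-D + R) ≤ R := by nlinarith

lemma aux_j2 {a D R : ℝ} (ha0 : 0 ≤ a) (ha1 : a ≤ 1) (hD : 0 ≤ D) (hR : 0 ≤ R) :
    -D ≤ a * (-D + R) := by nlinarith

lemma ouDt_bound (d : ℕ) {t τ : ℝ} (ht : 0 < t) (hτ : t / 2 ≤ τ) (y x : EuclideanSpace ℝ (Fin d)) :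
    |ouDt d τ y x| ≤ ouA d (t / 2) / ouS (t / 2) ^ 2 * ((d : ℝ) + 4 + ‖x‖) := by
  have ht2 : 0 < t / 2 := half_pos ht
  have hτ0 : 0 < τ := lt_of_lt_of_le ht2 hτ
  have hs₀ : 0 < ouS (t / 2) := ouS_pos ht2
  have hs₀1 : ouS (t / 2) ≤ 1 := ouS_le_one _
  have hs : 0 < ouS τ := ouS_pos hτ0
  have hss : ouS (t / 2) ≤ ouS τ := ouS_mono hτ
  have hs1 : ouS τ ≤ 1 := ouS_le_one _
  have hsq : ouS (t / 2) ^ 2 ≤ ouS τ := by nlinarith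
  have hsq2 : ouS (t / 2) ^ 2 ≤ ouS τ ^ 2 := by nlinarith
  have hA0 : 0 < ouA d τ := ouA_pos d hτ0
  have hAA : ouA d τ ≤ ouA d (t / 2) := ouA_anti d ht2 hτ
  have hd0 : (0:ℝ) ≤ (d:ℝ) := Nat.cast_nonneg d
  set u := x - Real.exp (-τ) • y with hu
  have hr0 : (0:ℝ) ≤ ‖u‖ := norm_nonneg u
  have hnx : (0:ℝ) ≤ ‖x‖ := norm_nonneg x
  set En := Real.exp (-‖u‖ ^ 2 / (2 * ouS τ)) with hEn
  have hE0 : 0 ≤ En := Real.exp_nonneg _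
  have hE1 : En ≤ 1 := gauss_bd0 hs
  have hrE : ‖u‖ * En ≤ 1 := gauss_bd1 hs hs1 hr0
  have hr2E : ‖u‖ ^ 2 * En ≤ 2 := gauss_bd2 hs hs1
  have ha1 : Real.exp (-τ) ^ 2 ≤ 1 := by
    have : Real.exp (-τ) ≤ 1 := Real.exp_le_one_iff.mpr (by linarith)
    nlinarith [Real.exp_pos (-τ)]
  have ha0 : (0:ℝ) ≤ Real.exp (-τ) ^ 2 := by positivity
  set ip := (⟪u, Real.exp (-τ) • y⟫ : ℝ) with hip
  have hipeq : ip = ⟪u, x⟫ - ‖u‖ ^ 2 := by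
    have h : Real.exp (-τ) • y = x - u := (sub_sub_cancel x (Real.exp (-τ) • y)).symm
    rw [hip, h, inner_sub_right, real_inner_self_eq_norm_sq]
  have hCS : |(⟪u, x⟫ : ℝ)| ≤ ‖u‖ * ‖x‖ := abs_real_inner_le_norm u x
  have hipb : |ip| ≤ ‖u‖ * ‖x‖ + ‖u‖ ^ 2 := by
    have h := abs_add_le (⟪u, x⟫ : ℝ) (-(‖u‖ ^ 2))
    rw [← sub_eq_add_neg, abs_neg, abs_of_nonneg (by positivity : (0:ℝ) ≤ ‖u‖ ^ 2)] at h
    rw [hipeq]; linarith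
  set X := Real.exp (-τ) ^ 2 * (-(d : ℝ) / ouS τ + ‖u‖ ^ 2 / ouS τ ^ 2) - ip / ouS τ with hX
  have hDt : ouDt d τ y x = ouA d τ * (En * X) := by
    simp only [ouDt, ouKernel_eq, hX, hEn, hip, hu]; ring
  have hds : (0:ℝ) ≤ (d:ℝ) / ouS τ := by positivity
  have hrs : (0:ℝ) ≤ ‖u‖ ^ 2 / ouS τ ^ 2 := by positivity
  have j1 : Real.exp (-τ) ^ 2 * (-(d : ℝ) / ouS τ + ‖u‖ ^ 2 / ouS τ ^ 2)
      ≤ ‖u‖ ^ 2 / ouS τ ^ 2 := by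
    simpa [neg_div] using aux_j1 ha0 ha1 hds hrs
  have j2 : -((d : ℝ) / ouS τ)
      ≤ Real.exp (-τ) ^ 2 * (-(d : ℝ) / ouS τ + ‖u‖ ^ 2 / ouS τ ^ 2) := by
    simpa [neg_div] using aux_j2 ha0 ha1 hds hrs
  have k1 : (d : ℝ) / ouS τ ≤ (d : ℝ) / ouS (t / 2) ^ 2 :=
    div_le_div_of_nonneg_left hd0 (by positivity) hsq
  have k2 : ‖u‖ ^ 2 / ouS τ ^ 2 ≤ ‖u‖ ^ 2 / ouS (t / 2) ^ 2 :=
    div_le_div_of_nonneg_left (by positivity) (by positivity) hsq2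
  have k3 : |ip| / ouS τ ≤ (‖u‖ * ‖x‖ + ‖u‖ ^ 2) / ouS (t / 2) ^ 2 :=
    div_le_div₀ (by positivity) hipb (by positivity) hsq
  have kip1 : ip / ouS τ ≤ |ip| / ouS τ := (div_le_div_iff_of_pos_right hs).mpr (le_abs_self ip)
  have kip2 : -(|ip| / ouS τ) ≤ ip / ouS τ := by
    rw [← neg_div]; exact (div_le_div_iff_of_pos_right hs).mpr (neg_abs_le ip)
  have hd0' : (0:ℝ) ≤ (d : ℝ) / ouS (t / 2) ^ 2 := by positivity
  have hXb : |X| ≤ ((d : ℝ) + ‖u‖ ^ 2 + (‖u‖ * ‖x‖ + ‖u‖ ^ 2)) / ouS (t / 2) ^ 2 := by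
    rw [abs_le]
    have hsplit : ((d : ℝ) + ‖u‖ ^ 2 + (‖u‖ * ‖x‖ + ‖u‖ ^ 2)) / ouS (t / 2) ^ 2
        = (d : ℝ) / ouS (t / 2) ^ 2 + ‖u‖ ^ 2 / ouS (t / 2) ^ 2
          + (‖u‖ * ‖x‖ + ‖u‖ ^ 2) / ouS (t / 2) ^ 2 := by ring
    constructor
    · rw [hsplit]; rw [hX]; linarith
    · rw [hsplit]; rw [hX]; linarith
  have hP0 : (0:ℝ) ≤ (d : ℝ) + ‖u‖ ^ 2 + (‖u‖ * ‖x‖ + ‖u‖ ^ 2) := by positivity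
  have hEP : En * ((d : ℝ) + ‖u‖ ^ 2 + (‖u‖ * ‖x‖ + ‖u‖ ^ 2)) ≤ (d : ℝ) + 4 + ‖x‖ := by
    nlinarith [mul_le_mul_of_nonneg_left hE1 hd0, mul_le_mul_of_nonneg_left hrE hnx]
  calc |ouDt d τ y x| = ouA d τ * (En * |X|) := by
        rw [hDt, abs_mul, abs_mul, abs_of_nonneg hA0.le, abs_of_nonneg hE0]
    _ ≤ ouA d τ * (En * (((d : ℝ) + ‖u‖ ^ 2 + (‖u‖ * ‖x‖ + ‖u‖ ^ 2)) / ouS (t / 2) ^ 2)) :=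
        mul_le_mul_of_nonneg_left (mul_le_mul_of_nonneg_left hXb hE0) hA0.le
    _ = ouA d τ * (En * ((d : ℝ) + ‖u‖ ^ 2 + (‖u‖ * ‖x‖ + ‖u‖ ^ 2))) / ouS (t / 2) ^ 2 := by
        ring
    _ ≤ ouA d (t / 2) * ((d : ℝ) + 4 + ‖x‖) / ouS (t / 2) ^ 2 := by
        apply (div_le_div_iff_of_pos_right (by positivity)).mpr
        exact mul_le_mul hAA hEP (by positivity) (le_trans hA0.le hAA)
    _ = ouA d (t / 2) / ouS (t / 2) ^ 2 * ((d : ℝ) + 4 + ‖x‖) := by ring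
/-! ### Measurability and integrability -/

lemma continuous_ouKernel (d : ℕ) (t : ℝ) (x : EuclideanSpace ℝ (Fin d)) :
    Continuous fun y => ouKernel d t y x := by
  apply Continuous.mul continuous_const
  apply Real.continuous_exp.comp
  apply Continuous.div_const
  apply Continuous.neg
  exact (continuous_const.sub (continuous_const_smul _)).norm.pow 2

lemma continuous_ouU (d : ℕ) (t : ℝ) (x : EuclideanSpace ℝ (Fin d)) :
    Continuous fun y : EuclideanSpace ℝ (Fin d) => x - Real.exp (-t) • y :=
  continuous_const.sub (continuous_const_smul _)

lemma continuous_ouG (d : ℕ) (t : ℝ) (x : EuclideanSpace ℝ (Fin d)) :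
    Continuous fun y => ouG d t y x :=
  ((continuous_ouKernel d t x).mul continuous_const).smul
    ((innerSL ℝ).continuous.comp (continuous_ouU d t x))

lemma continuous_ouH (d : ℕ) (t : ℝ) (x e : EuclideanSpace ℝ (Fin d)) :
    Continuous fun y => ouH d t y x e := by
  apply Continuous.add
  · exact ((continuous_ouKernel d t x).mul continuous_const).smul continuous_const
  · exact ((((continuous_ouKernel d t x).mul continuous_const).mul continuous_const).mul
      ((continuous_ouU d t x).inner continuous_const)).smul
      ((innerSL ℝ).continuous.comp (continuous_ouU d t x))

lemma p0_integrable {d : ℕ} {p₀ : EuclideanSpace ℝ (Fin d) → ℝ} (h₀int : ∫ y, p₀ y = 1) :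
    Integrable p₀ := by
  by_contra h
  rw [integral_undef h] at h₀int
  exact one_ne_zero h₀int.symm

lemma integrand_meas {d : ℕ} {p₀ : EuclideanSpace ℝ (Fin d) → ℝ} (h₀meas : Measurable p₀)
    (t : ℝ) (x : EuclideanSpace ℝ (Fin d)) :
    AEStronglyMeasurable (fun y => p₀ y * ouKernel d t y x) volume :=
  (h₀meas.mul (continuous_ouKernel d t x).measurable).aestronglyMeasurable

lemma integrand_int {d : ℕ} {p₀ : EuclideanSpace ℝ (Fin d) → ℝ} (h₀meas : Measurable p₀)
    (h₀nonneg : ∀ y, 0 ≤ p₀ y) (h₀int : ∫ y, p₀ y = 1)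
    {t : ℝ} (ht : 0 < t) (x : EuclideanSpace ℝ (Fin d)) :
    Integrable (fun y => p₀ y * ouKernel d t y x) := by
  apply Integrable.mono' ((p0_integrable h₀int).const_mul (ouA d t))
    (integrand_meas h₀meas t x)
  apply Filter.Eventually.of_forall
  intro y
  rw [Real.norm_eq_abs, abs_mul, abs_of_nonneg (h₀nonneg y),
    abs_of_nonneg (ouKernel_nonneg d ht y x)]
  exact le_trans (mul_le_mul_of_nonneg_left (ouKernel_le d ht y x) (h₀nonneg y))
    (le_of_eq (mul_comm _ _))

lemma integrandG_int {d : ℕ} {p₀ : EuclideanSpace ℝ (Fin d) → ℝ} (h₀meas : Measurable p₀)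
    (h₀nonneg : ∀ y, 0 ≤ p₀ y) (h₀int : ∫ y, p₀ y = 1)
    {t : ℝ} (ht : 0 < t) (x : EuclideanSpace ℝ (Fin d)) :
    Integrable (fun y => p₀ y • ouG d t y x) := by
  apply Integrable.mono' ((p0_integrable h₀int).const_mul (ouA d t * (ouS t)⁻¹))
    (h₀meas.aestronglyMeasurable.smul (continuous_ouG d t x).aestronglyMeasurable)
  apply Filter.Eventually.of_forall
  intro y
  simp only [Pi.smul_apply']
  have h := norm_smul (α := ℝ)
    (β := EuclideanSpace ℝ (Fin d) →L[ℝ] ℝ) (p₀ y) (ouG d t y x)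
  rw [h, Real.norm_eq_abs, abs_of_nonneg (h₀nonneg y)]
  exact le_trans (mul_le_mul_of_nonneg_left (ouG_norm_le d ht y x) (h₀nonneg y))
    (le_of_eq (mul_comm _ _))

lemma integrandH_int {d : ℕ} {p₀ : EuclideanSpace ℝ (Fin d) → ℝ} (h₀meas : Measurable p₀)
    (h₀nonneg : ∀ y, 0 ≤ p₀ y) (h₀int : ∫ y, p₀ y = 1)
    {t : ℝ} (ht : 0 < t) (x e : EuclideanSpace ℝ (Fin d)) (he : ‖e‖ = 1) :
    Integrable (fun y => p₀ y • ouH d t y x e) := by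
  apply Integrable.mono'
    ((p0_integrable h₀int).const_mul
      (ouA d t * (ouS t)⁻¹ + 2 * ouA d t * ((ouS t)⁻¹ * (ouS t)⁻¹)))
    (h₀meas.aestronglyMeasurable.smul (continuous_ouH d t x e).aestronglyMeasurable)
  apply Filter.Eventually.of_forall
  intro y
  simp only [Pi.smul_apply']
  have h := norm_smul (α := ℝ)
    (β := EuclideanSpace ℝ (Fin d) →L[ℝ] ℝ) (p₀ y) (ouH d t y x e)
  rw [h, Real.norm_eq_abs, abs_of_nonneg (h₀nonneg y)]
  exact le_trans (mul_le_mul_of_nonneg_left (ouH_norm_le d ht y x e he) (h₀nonneg y))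
    (le_of_eq (mul_comm _ _))

/-- differentiation under the integral sign, in space -/
lemma marginal_hasFDerivAt {d : ℕ} {p₀ : EuclideanSpace ℝ (Fin d) → ℝ} (h₀meas : Measurable p₀)
    (h₀nonneg : ∀ y, 0 ≤ p₀ y) (h₀int : ∫ y, p₀ y = 1)
    {t : ℝ} (ht : 0 < t) (x₀ : EuclideanSpace ℝ (Fin d)) :
    HasFDerivAt (fun z => ouMarginal d p₀ t z) (∫ y, p₀ y • ouG d t y x₀) x₀ := by
  exact hasFDerivAt_integral_of_dominated_of_fderiv_le
    (F := fun z y => p₀ y * ouKernel d t y z) (F' := fun z y => p₀ y • ouG d t y z)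
    (bound := fun y => ouA d t * (ouS t)⁻¹ * p₀ y) (Metric.ball_mem_nhds x₀ zero_lt_one)
    (Filter.Eventually.of_forall fun z => integrand_meas h₀meas t z)
    (integrand_int h₀meas h₀nonneg h₀int ht x₀)
    (h₀meas.aestronglyMeasurable.smul (continuous_ouG d t x₀).aestronglyMeasurable)
    (Filter.Eventually.of_forall fun y z _ => by
      have h := norm_smul (α := ℝ)
        (β := EuclideanSpace ℝ (Fin d) →L[ℝ] ℝ) (p₀ y) (ouG d t y z)
      rw [h, Real.norm_eq_abs, abs_of_nonneg (h₀nonneg y)]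
      exact le_trans (mul_le_mul_of_nonneg_left (ouG_norm_le d ht y z) (h₀nonneg y))
        (le_of_eq (mul_comm _ _)))
    (((p0_integrable h₀int).const_mul (ouA d t * (ouS t)⁻¹)))
    (Filter.Eventually.of_forall fun y z _ =>
      (ouKernel_hasFDerivAt d t y z).const_mul (p₀ y))
/-- differentiation under the integral sign for the derivative integrand, in space -/
lemma marginal2_hasFDerivAt {d : ℕ} {p₀ : EuclideanSpace ℝ (Fin d) → ℝ} (h₀meas : Measurable p₀)
    (h₀nonneg : ∀ y, 0 ≤ p₀ y) (h₀int : ∫ y, p₀ y = 1)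
    {t : ℝ} (ht : 0 < t) (x₀ e : EuclideanSpace ℝ (Fin d)) (he : ‖e‖ = 1) :
    HasFDerivAt
      (fun z => ∫ y, p₀ y *
        (ouKernel d t y z * (-(ouS t)⁻¹) * ⟪z - Real.exp (-t) • y, e⟫))
      (∫ y, p₀ y • ouH d t y x₀ e) x₀ := by
  have hs := ouS_pos ht
  have hcont : ∀ z : EuclideanSpace ℝ (Fin d), Continuous fun y =>
      ouKernel d t y z * (-(ouS t)⁻¹) * ⟪z - Real.exp (-t) • y, e⟫ :=
    fun z => ((continuous_ouKernel d t z).mul continuous_const).mul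
      ((continuous_ouU d t z).inner continuous_const)
  have hmeas : ∀ z : EuclideanSpace ℝ (Fin d), AEStronglyMeasurable
      (fun y => p₀ y * (ouKernel d t y z * (-(ouS t)⁻¹) * ⟪z - Real.exp (-t) • y, e⟫))
      volume :=
    fun z => (h₀meas.mul (hcont z).measurable).aestronglyMeasurable
  have hint : Integrable
      (fun y => p₀ y * (ouKernel d t y x₀ * (-(ouS t)⁻¹) * ⟪x₀ - Real.exp (-t) • y, e⟫)) := by
    apply Integrable.mono' ((p0_integrable h₀int).const_mul (ouA d t * (ouS t)⁻¹))
      (hmeas x₀)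
    apply Filter.Eventually.of_forall
    intro y
    rw [Real.norm_eq_abs, abs_mul, abs_of_nonneg (h₀nonneg y)]
    have hb : |ouKernel d t y x₀ * (-(ouS t)⁻¹) * ⟪x₀ - Real.exp (-t) • y, e⟫|
        ≤ ouA d t * (ouS t)⁻¹ := by
      set u := x₀ - Real.exp (-t) • y with hu
      have h1 : |ouKernel d t y x₀ * (-(ouS t)⁻¹)| = ouKernel d t y x₀ * (ouS t)⁻¹ := by
        rw [abs_mul, abs_of_nonneg (ouKernel_nonneg d ht y x₀), abs_neg,
          abs_of_nonneg (inv_nonneg.mpr hs.le)]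
      rw [abs_mul, h1]
      have h2 : |(⟪u, e⟫ : ℝ)| ≤ ‖u‖ := by
        calc |(⟪u, e⟫ : ℝ)| ≤ ‖u‖ * ‖e‖ := abs_real_inner_le_norm u e
        _ = ‖u‖ := by rw [he, mul_one]
      calc ouKernel d t y x₀ * (ouS t)⁻¹ * |(⟪u, e⟫ : ℝ)|
          ≤ ouKernel d t y x₀ * (ouS t)⁻¹ * ‖u‖ := by
            apply mul_le_mul_of_nonneg_left h2
            have := ouKernel_nonneg d ht y x₀; positivity
        _ = ouA d t * (ouS t)⁻¹ * (‖u‖ * Real.exp (-‖u‖ ^ 2 / (2 * ouS t))) := by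
            rw [ouKernel_eq, ← hu]; ring
        _ ≤ ouA d t * (ouS t)⁻¹ * 1 := by
            apply mul_le_mul_of_nonneg_left (gauss_bd1 hs (ouS_le_one t) (norm_nonneg u))
            have := ouA_pos d ht; positivity
        _ = ouA d t * (ouS t)⁻¹ := mul_one _
    exact le_trans (mul_le_mul_of_nonneg_left hb (h₀nonneg y)) (le_of_eq (mul_comm _ _))
  exact hasFDerivAt_integral_of_dominated_of_fderiv_le
    (F := fun z y => p₀ y *
      (ouKernel d t y z * (-(ouS t)⁻¹) * ⟪z - Real.exp (-t) • y, e⟫))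
    (F' := fun z y => p₀ y • ouH d t y z e)
    (bound := fun y =>
      (ouA d t * (ouS t)⁻¹ + 2 * ouA d t * ((ouS t)⁻¹ * (ouS t)⁻¹)) * p₀ y) (Metric.ball_mem_nhds x₀ zero_lt_one)
    (Filter.Eventually.of_forall hmeas) hint
    (h₀meas.aestronglyMeasurable.smul (continuous_ouH d t x₀ e).aestronglyMeasurable)
    (Filter.Eventually.of_forall fun y z _ => by
      have h := norm_smul (α := ℝ)
        (β := EuclideanSpace ℝ (Fin d) →L[ℝ] ℝ) (p₀ y) (ouH d t y z e)
      rw [h, Real.norm_eq_abs, abs_of_nonneg (h₀nonneg y)]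
      exact le_trans (mul_le_mul_of_nonneg_left (ouH_norm_le d ht y z e he) (h₀nonneg y))
        (le_of_eq (mul_comm _ _)))
    (((p0_integrable h₀int).const_mul _))
    (Filter.Eventually.of_forall fun y z _ =>
      (ouKernel_hasFDerivAt2 d t y z e).const_mul (p₀ y))

/-- differentiation under the integral sign, in time -/
lemma marginal_hasDerivAt {d : ℕ} {p₀ : EuclideanSpace ℝ (Fin d) → ℝ} (h₀meas : Measurable p₀)
    (h₀nonneg : ∀ y, 0 ≤ p₀ y) (h₀int : ∫ y, p₀ y = 1)
    {t : ℝ} (ht : 0 < t) (x : EuclideanSpace ℝ (Fin d)) :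
    HasDerivAt (fun τ => ouMarginal d p₀ τ x) (∫ y, p₀ y * ouDt d t y x) t := by
  have hmem : ∀ τ : ℝ, τ ∈ Metric.ball t (t / 2) → t / 2 ≤ τ := by
    intro τ hτ
    rw [Metric.mem_ball, Real.dist_eq, abs_lt] at hτ
    linarith [hτ.1]
  have h := hasDerivAt_integral_of_dominated_loc_of_deriv_le
    (F := fun τ y => p₀ y * ouKernel d τ y x) (F' := fun τ y => p₀ y * ouDt d τ y x)
    (x₀ := t) (s := Metric.ball t (t / 2))
    (bound := fun y => ouA d (t / 2) / ouS (t / 2) ^ 2 * ((d : ℝ) + 4 + ‖x‖) * p₀ y)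
    (Metric.ball_mem_nhds t (half_pos ht))
    (Filter.Eventually.of_forall fun τ => integrand_meas h₀meas τ x)
    (integrand_int h₀meas h₀nonneg h₀int ht x)
    (by
      have hc : Continuous fun y => ouDt d t y x := by
        simp only [ouDt]
        exact (continuous_ouKernel d t x).mul
          ((continuous_const.mul
            ((continuous_const.div_const _).add
              (((continuous_ouU d t x).norm.pow 2).div_const _))).sub
          (((continuous_ouU d t x).inner (continuous_const_smul _)).div_const _))
      exact (h₀meas.mul hc.measurable).aestronglyMeasurable)
    (Filter.Eventually.of_forall fun y τ hτ => by
      rw [Real.norm_eq_abs, abs_mul, abs_of_nonneg (h₀nonneg y)]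
      exact le_trans
        (mul_le_mul_of_nonneg_left (ouDt_bound d ht (hmem τ hτ) y x) (h₀nonneg y))
        (le_of_eq (mul_comm _ _)))
    (((p0_integrable h₀int).const_mul _))
    (Filter.Eventually.of_forall fun y τ hτ =>
      (ouKernel_hasDerivAt d (lt_of_lt_of_le (half_pos ht) (hmem τ hτ)) y x).const_mul (p₀ y))
  exact h.2
/-! ### Coordinate identities and the pointwise Fokker–Planck identity -/

lemma inner_single_self (d : ℕ) (i : Fin d) :
    (⟪(EuclideanSpace.single i (1:ℝ) : EuclideanSpace ℝ (Fin d)),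
      EuclideanSpace.single i (1:ℝ)⟫ : ℝ) = 1 := by
  rw [EuclideanSpace.inner_single_right]
  simp

lemma sum_inner_single_sq {d : ℕ} (u : EuclideanSpace ℝ (Fin d)) :
    ∑ i : Fin d, (⟪u, (EuclideanSpace.single i (1:ℝ) : EuclideanSpace ℝ (Fin d))⟫ : ℝ)
      * ⟪u, EuclideanSpace.single i (1:ℝ)⟫ = ‖u‖ ^ 2 := by
  have h : ∀ i : Fin d,
      (⟪u, (EuclideanSpace.single i (1:ℝ) : EuclideanSpace ℝ (Fin d))⟫ : ℝ) = u i := by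
    intro i; rw [EuclideanSpace.inner_single_right]; simp
  simp only [h]
  rw [← real_inner_self_eq_norm_sq]
  simp [PiLp.inner_apply, RCLike.inner_apply, conj_trivial]
  rw [EuclideanSpace.real_norm_sq_eq]
  simp [sq]

lemma ouDt_split (d : ℕ) {t : ℝ} (ht : 0 < t) (y x : EuclideanSpace ℝ (Fin d)) :
    ouDt d t y x = (d : ℝ) * ouKernel d t y x
      + ouKernel d t y x * (-(ouS t)⁻¹) * ⟪x - Real.exp (-t) • y, x⟫
      + ouKernel d t y x *
          ((ouS t)⁻¹ * (ouS t)⁻¹ * ‖x - Real.exp (-t) • y‖ ^ 2 - (d : ℝ) * (ouS t)⁻¹) := by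
  have hS : ouS t = 1 - Real.exp (-t) ^ 2 := by
    rw [ouS, show (-2:ℝ) * t = -t + -t by ring, Real.exp_add, sq]
  have hs0 : (1:ℝ) - Real.exp (-t) ^ 2 ≠ 0 := by rw [← hS]; exact (ouS_pos ht).ne'
  set u := x - Real.exp (-t) • y with hu
  have hipeq : (⟪u, Real.exp (-t) • y⟫ : ℝ) = ⟪u, x⟫ - ‖u‖ ^ 2 := by
    have h : Real.exp (-t) • y = x - u := (sub_sub_cancel x (Real.exp (-t) • y)).symm
    rw [h, inner_sub_right, real_inner_self_eq_norm_sq]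
  rw [ouDt, ← hu, hipeq, hS]
  field_simp
  ring

lemma integrandB_int {d : ℕ} {p₀ : EuclideanSpace ℝ (Fin d) → ℝ} (h₀meas : Measurable p₀)
    (h₀nonneg : ∀ y, 0 ≤ p₀ y) (h₀int : ∫ y, p₀ y = 1)
    {t : ℝ} (ht : 0 < t) (x : EuclideanSpace ℝ (Fin d)) :
    Integrable (fun y => p₀ y *
      (ouKernel d t y x * (-(ouS t)⁻¹) * ⟪x - Real.exp (-t) • y, x⟫)) := by
  have hs := ouS_pos ht
  apply Integrable.mono' ((p0_integrable h₀int).const_mul (ouA d t * (ouS t)⁻¹ * ‖x‖))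
    ((h₀meas.mul (((continuous_ouKernel d t x).mul continuous_const).mul
      ((continuous_ouU d t x).inner continuous_const)).measurable).aestronglyMeasurable)
  apply Filter.Eventually.of_forall
  intro y
  simp only [Pi.mul_apply, Pi.sub_apply, Pi.pow_apply]
  rw [Real.norm_eq_abs, abs_mul, abs_of_nonneg (h₀nonneg y)]
  have hb : |ouKernel d t y x * (-(ouS t)⁻¹) * ⟪x - Real.exp (-t) • y, x⟫|
      ≤ ouA d t * (ouS t)⁻¹ * ‖x‖ := by
    set u := x - Real.exp (-t) • y with hu
    have h1 : |ouKernel d t y x * (-(ouS t)⁻¹)| = ouKernel d t y x * (ouS t)⁻¹ := by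
      rw [abs_mul, abs_of_nonneg (ouKernel_nonneg d ht y x), abs_neg,
        abs_of_nonneg (inv_nonneg.mpr hs.le)]
    rw [abs_mul, h1]
    calc ouKernel d t y x * (ouS t)⁻¹ * |(⟪u, x⟫ : ℝ)|
        ≤ ouKernel d t y x * (ouS t)⁻¹ * (‖u‖ * ‖x‖) := by
          apply mul_le_mul_of_nonneg_left (abs_real_inner_le_norm u x)
          have := ouKernel_nonneg d ht y x; positivity
      _ = ouA d t * (ouS t)⁻¹ * ‖x‖ *
            (‖u‖ * Real.exp (-‖u‖ ^ 2 / (2 * ouS t))) := by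
          rw [ouKernel_eq, ← hu]; ring
      _ ≤ ouA d t * (ouS t)⁻¹ * ‖x‖ * 1 := by
          apply mul_le_mul_of_nonneg_left (gauss_bd1 hs (ouS_le_one t) (norm_nonneg u))
          have := ouA_pos d ht; positivity
      _ = ouA d t * (ouS t)⁻¹ * ‖x‖ := mul_one _
  exact le_trans (mul_le_mul_of_nonneg_left hb (h₀nonneg y)) (le_of_eq (mul_comm _ _))

lemma integrandC_int {d : ℕ} {p₀ : EuclideanSpace ℝ (Fin d) → ℝ} (h₀meas : Measurable p₀)
    (h₀nonneg : ∀ y, 0 ≤ p₀ y) (h₀int : ∫ y, p₀ y = 1)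
    {t : ℝ} (ht : 0 < t) (x : EuclideanSpace ℝ (Fin d)) :
    Integrable (fun y => p₀ y *
      (ouKernel d t y x *
        ((ouS t)⁻¹ * (ouS t)⁻¹ * ‖x - Real.exp (-t) • y‖ ^ 2 - (d : ℝ) * (ouS t)⁻¹))) := by
  have hs := ouS_pos ht
  have hA := ouA_pos d ht
  apply Integrable.mono' ((p0_integrable h₀int).const_mul
      (2 * ouA d t * ((ouS t)⁻¹ * (ouS t)⁻¹) + (d : ℝ) * ouA d t * (ouS t)⁻¹))
    ((h₀meas.mul ((continuous_ouKernel d t x).mul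
      ((continuous_const.mul ((continuous_ouU d t x).norm.pow 2)).sub
        continuous_const)).measurable).aestronglyMeasurable)
  apply Filter.Eventually.of_forall
  intro y
  simp only [Pi.mul_apply, Pi.sub_apply, Pi.pow_apply]
  rw [Real.norm_eq_abs, abs_mul, abs_of_nonneg (h₀nonneg y)]
  have hb : |ouKernel d t y x *
      ((ouS t)⁻¹ * (ouS t)⁻¹ * ‖x - Real.exp (-t) • y‖ ^ 2 - (d : ℝ) * (ouS t)⁻¹)|
      ≤ 2 * ouA d t * ((ouS t)⁻¹ * (ouS t)⁻¹) + (d : ℝ) * ouA d t * (ouS t)⁻¹ := by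
    set u := x - Real.exp (-t) • y with hu
    have hQ0 := ouKernel_nonneg d ht y x
    have hQA := ouKernel_le d ht y x
    have hr2E : ‖u‖ ^ 2 * Real.exp (-‖u‖ ^ 2 / (2 * ouS t)) ≤ 2 :=
      gauss_bd2 hs (ouS_le_one t)
    rw [abs_mul, abs_of_nonneg hQ0]
    have htri : |(ouS t)⁻¹ * (ouS t)⁻¹ * ‖u‖ ^ 2 - (d : ℝ) * (ouS t)⁻¹|
        ≤ (ouS t)⁻¹ * (ouS t)⁻¹ * ‖u‖ ^ 2 + (d : ℝ) * (ouS t)⁻¹ := by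
      have h := abs_add_le ((ouS t)⁻¹ * (ouS t)⁻¹ * ‖u‖ ^ 2) (-((d : ℝ) * (ouS t)⁻¹))
      rw [← sub_eq_add_neg, abs_neg,
        abs_of_nonneg (by positivity : (0:ℝ) ≤ (ouS t)⁻¹ * (ouS t)⁻¹ * ‖u‖ ^ 2),
        abs_of_nonneg (by positivity : (0:ℝ) ≤ (d : ℝ) * (ouS t)⁻¹)] at h
      exact h
    calc ouKernel d t y x * |(ouS t)⁻¹ * (ouS t)⁻¹ * ‖u‖ ^ 2 - (d : ℝ) * (ouS t)⁻¹|
        ≤ ouKernel d t y x *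
            ((ouS t)⁻¹ * (ouS t)⁻¹ * ‖u‖ ^ 2 + (d : ℝ) * (ouS t)⁻¹) :=
          mul_le_mul_of_nonneg_left htri hQ0
      _ = (ouA d t * ((ouS t)⁻¹ * (ouS t)⁻¹)) *
            (‖u‖ ^ 2 * Real.exp (-‖u‖ ^ 2 / (2 * ouS t)))
          + ouKernel d t y x * ((d : ℝ) * (ouS t)⁻¹) := by
          rw [ouKernel_eq, ← hu]; ring
      _ ≤ (ouA d t * ((ouS t)⁻¹ * (ouS t)⁻¹)) * 2
          + ouA d t * ((d : ℝ) * (ouS t)⁻¹) := by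
          gcongr
      _ = 2 * ouA d t * ((ouS t)⁻¹ * (ouS t)⁻¹) + (d : ℝ) * ouA d t * (ouS t)⁻¹ := by
          ring
  exact le_trans (mul_le_mul_of_nonneg_left hb (h₀nonneg y)) (le_of_eq (mul_comm _ _))
theorem stmt1 (d : ℕ) (p₀ : EuclideanSpace ℝ (Fin d) → ℝ)
    (h₀meas : Measurable p₀) (h₀nonneg : ∀ y, 0 ≤ p₀ y)
    (h₀int : ∫ y, p₀ y = 1) :
    ∀ t > (0 : ℝ), ∀ x : EuclideanSpace ℝ (Fin d),
      HasDerivAt (fun s => ouMarginal d p₀ s x)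
        ((d : ℝ) * ouMarginal d p₀ t x
          + ⟪x, gradient (fun y => ouMarginal d p₀ t y) x⟫
          + laplacian d (fun y => ouMarginal d p₀ t y) x) t := by
  intro t ht x
  have hs := ouS_pos ht
  have heN : ∀ i : Fin d, ‖(EuclideanSpace.single i (1:ℝ) : EuclideanSpace ℝ (Fin d))‖ = 1 := by
    intro i; rw [EuclideanSpace.norm_single]; exact norm_one
  -- the gradient term
  have hgrad : (⟪x, gradient (fun y => ouMarginal d p₀ t y) x⟫ : ℝ)
      = ∫ y, p₀ y * (ouKernel d t y x * (-(ouS t)⁻¹) * ⟪x - Real.exp (-t) • y, x⟫) := by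
    rw [real_inner_comm]
    rw [show gradient (fun y => ouMarginal d p₀ t y) x
        = (InnerProductSpace.toDual ℝ _).symm (fderiv ℝ (fun y => ouMarginal d p₀ t y) x)
        from rfl]
    rw [InnerProductSpace.toDual_symm_apply]
    rw [(marginal_hasFDerivAt h₀meas h₀nonneg h₀int ht x).fderiv]
    rw [ContinuousLinearMap.integral_apply (integrandG_int h₀meas h₀nonneg h₀int ht x)]
    congr 1
  -- the laplacian term
  have hlap : laplacian d (fun y => ouMarginal d p₀ t y) x
      = ∫ y, p₀ y * (ouKernel d t y x *
          ((ouS t)⁻¹ * (ouS t)⁻¹ * ‖x - Real.exp (-t) • y‖ ^ 2 - (d : ℝ) * (ouS t)⁻¹)) := by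
    have hterm : ∀ i : Fin d,
        fderiv ℝ (fun z => fderiv ℝ (fun w => ouMarginal d p₀ t w) z
            (EuclideanSpace.single i 1)) x (EuclideanSpace.single i 1)
        = ∫ y, (p₀ y • ouH d t y x (EuclideanSpace.single i 1)) (EuclideanSpace.single i 1) := by
      intro i
      have hfun : (fun z => fderiv ℝ (fun w => ouMarginal d p₀ t w) z
            (EuclideanSpace.single i 1))
          = fun z => ∫ y, p₀ y * (ouKernel d t y z * (-(ouS t)⁻¹) *
              ⟪z - Real.exp (-t) • y, EuclideanSpace.single i 1⟫) := by
        funext z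
        rw [(marginal_hasFDerivAt h₀meas h₀nonneg h₀int ht z).fderiv,
          ContinuousLinearMap.integral_apply (integrandG_int h₀meas h₀nonneg h₀int ht z)]
        congr 1
      rw [hfun,
        (marginal2_hasFDerivAt h₀meas h₀nonneg h₀int ht x
          (EuclideanSpace.single i 1) (heN i)).fderiv,
        ContinuousLinearMap.integral_apply
          (integrandH_int h₀meas h₀nonneg h₀int ht x (EuclideanSpace.single i 1) (heN i))]
    have hptwise : ∀ y : EuclideanSpace ℝ (Fin d),
        ∑ i : Fin d, (p₀ y • ouH d t y x (EuclideanSpace.single i 1))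
            (EuclideanSpace.single i 1)
        = p₀ y * (ouKernel d t y x *
            ((ouS t)⁻¹ * (ouS t)⁻¹ * ‖x - Real.exp (-t) • y‖ ^ 2 - (d : ℝ) * (ouS t)⁻¹)) := by
      intro y
      have hsum1 : ∀ i : Fin d,
          (p₀ y • ouH d t y x (EuclideanSpace.single i 1)) (EuclideanSpace.single i 1)
          = p₀ y * (ouKernel d t y x * -(ouS t)⁻¹)
            + p₀ y * (ouKernel d t y x * (ouS t)⁻¹ * (ouS t)⁻¹) *
              ((⟪x - Real.exp (-t) • y, EuclideanSpace.single i 1⟫ : ℝ) *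
                ⟪x - Real.exp (-t) • y, EuclideanSpace.single i 1⟫) := by
        intro i
        simp only [ouH, ContinuousLinearMap.smul_apply, ContinuousLinearMap.add_apply,
          innerSL_apply_apply, smul_eq_mul, inner_single_self]
        ring
      rw [Finset.sum_congr rfl fun i _ => hsum1 i]
      rw [Finset.sum_add_distrib, Finset.sum_const, Finset.card_univ, Fintype.card_fin,
        ← Finset.mul_sum, sum_inner_single_sq, nsmul_eq_mul]
      ring
    simp only [laplacian]
    rw [Finset.sum_congr rfl fun i _ => hterm i]
    rw [← integral_finset_sum _ (fun i _ =>
      (integrandH_int h₀meas h₀nonneg h₀int ht x (EuclideanSpace.single i 1)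
        (heN i)).apply_continuousLinearMap _)]
    congr 1; funext y
    exact hptwise y
  -- combine everything
  have hD := marginal_hasDerivAt h₀meas h₀nonneg h₀int ht x
  have hEq : ∫ y, p₀ y * ouDt d t y x
      = (d : ℝ) * ouMarginal d p₀ t x
        + ⟪x, gradient (fun y => ouMarginal d p₀ t y) x⟫
        + laplacian d (fun y => ouMarginal d p₀ t y) x := by
    have intA := (integrand_int h₀meas h₀nonneg h₀int ht x).const_mul (d : ℝ)
    have intB := integrandB_int h₀meas h₀nonneg h₀int ht x
    have intC := integrandC_int h₀meas h₀nonneg h₀int ht x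
    rw [hgrad, hlap]
    simp only [ouMarginal]
    rw [show (∫ y, p₀ y * ouDt d t y x)
        = ∫ y, ((d : ℝ) * (p₀ y * ouKernel d t y x)
          + p₀ y * (ouKernel d t y x * (-(ouS t)⁻¹) * ⟪x - Real.exp (-t) • y, x⟫)
          + p₀ y * (ouKernel d t y x *
              ((ouS t)⁻¹ * (ouS t)⁻¹ * ‖x - Real.exp (-t) • y‖ ^ 2 - (d : ℝ) * (ouS t)⁻¹)))
      from integral_congr_ae (Filter.Eventually.of_forall fun y => by
        dsimp only; rw [ouDt_split d ht y x]; ring)]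
    have intAB : Integrable (fun y => (d : ℝ) * (p₀ y * ouKernel d t y x)
        + p₀ y * (ouKernel d t y x * (-(ouS t)⁻¹) * ⟪x - Real.exp (-t) • y, x⟫)) :=
      intA.add intB
    rw [integral_add intAB intC, integral_add intA intB, integral_const_mul]
  exact hEq ▸ hD
end
end

section
/- There exists a universal constant C > 0 with the following property. Let μ be a probability measure on ℝ^d with positive twice continuously differentiable density p (with respect to Lebesgue measure) and finite second moment M₂² = ∫ ‖x‖² dμ(x), such that x ↦ ∇ log p(x) is L-Lipschitz and ∫ ‖∇ log p‖² dμ < +∞. Then the relative Fisher information of μ with respect to the standard Gaussian satisfies I(μ | γ^d) = ∫ ‖∇ log(p(x)/γ^d(x))‖² dμ(x) ≤ C ( dL + M₂² ). -/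
open MeasureTheory Real Set
open scoped ENNReal NNReal

noncomputable section

lemma grad_log_div_gauss {d : ℕ} {p : EuclideanSpace ℝ (Fin d) → ℝ}
    (hp0 : ∀ x, 0 < p x) (hp : ContDiff ℝ 2 p) (x : EuclideanSpace ℝ (Fin d)) :
    gradient (fun y => Real.log (p y / gaussDensity d y)) x
      = gradient (fun y => Real.log (p y)) x + x := by
  have hlog : ContDiff ℝ 2 fun y => Real.log (p y) := hp.log (fun y => (hp0 y).ne')
  have hdiff : Differentiable ℝ fun y => Real.log (p y) :=
    hlog.differentiable (by norm_num)
  have hg : HasFDerivAt (fun y => Real.log (p y))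
      (InnerProductSpace.toDual ℝ (EuclideanSpace ℝ (Fin d))
        (gradient (fun y => Real.log (p y)) x)) x :=
    ((hdiff x).hasGradientAt).hasFDerivAt
  have hc : (0:ℝ) < (2 * π) ^ (-(d : ℝ) / 2) :=
    Real.rpow_pos_of_pos (by positivity) _
  have hfun : (fun y : EuclideanSpace ℝ (Fin d) => Real.log (p y / gaussDensity d y))
      = fun y : EuclideanSpace ℝ (Fin d) =>
        Real.log (p y) + ((1/2) * ‖y‖^2 - Real.log ((2 * π) ^ (-(d : ℝ) / 2))) := by
    funext y
    simp only [gaussDensity]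
    rw [Real.log_div (hp0 y).ne' (by positivity),
      Real.log_mul hc.ne' (Real.exp_ne_zero _), Real.log_exp]
    ring
  have hns : HasFDerivAt
      (fun y : EuclideanSpace ℝ (Fin d) =>
        (1/2) * ‖y‖^2 - Real.log ((2 * π) ^ (-(d : ℝ) / 2)))
      (InnerProductSpace.toDual ℝ (EuclideanSpace ℝ (Fin d)) x) x := by
    have h1 : HasFDerivAt (fun y : EuclideanSpace ℝ (Fin d) => ‖y‖^2) (2 • innerSL ℝ x) x := by
      simpa using (hasFDerivAt_id x).norm_sq
    have h2 := (h1.const_mul ((1:ℝ)/2)).sub_const (Real.log ((2 * π) ^ (-(d : ℝ) / 2)))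
    refine h2.congr_fderiv ?_
    ext y
    simp [InnerProductSpace.toDual_apply_apply, two_smul]
    ring
  rw [hfun]
  exact (hasFDerivAt_iff_hasGradientAt.mp (hg.add hns)).gradient.trans
    (by rw [map_add]; simp; rfl)

lemma int_grad_sq_le {d : ℕ} {p : EuclideanSpace ℝ (Fin d) → ℝ} {L : ℝ≥0}
    (hp0 : ∀ x, 0 < p x) (hp : ContDiff ℝ 2 p)
    (hLip : LipschitzWith L (fun x => gradient (fun y => Real.log (p y)) x))
    (hprob : IsProbabilityMeasure
      (volume.withDensity (fun x : EuclideanSpace ℝ (Fin d) => ENNReal.ofReal (p x))))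
    (hI : Integrable (fun x => ‖gradient (fun y => Real.log (p y)) x‖ ^ 2)
      (volume.withDensity (fun x => ENNReal.ofReal (p x)))) :
    ∫ x, ‖gradient (fun y => Real.log (p y)) x‖ ^ 2
      ∂(volume.withDensity fun x => ENNReal.ofReal (p x)) ≤ (d : ℝ) * L := by
  classical
  set f : EuclideanSpace ℝ (Fin d) → ℝ := fun y => Real.log (p y) with hf_def
  set g : EuclideanSpace ℝ (Fin d) → EuclideanSpace ℝ (Fin d) := gradient f with hg_def
  have hpc : Continuous p := hp.continuous
  have hpm : Measurable p := hpc.measurable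
  have hpd : Differentiable ℝ p := hp.differentiable two_ne_zero
  have hlog : ContDiff ℝ 2 f := hp.log (fun y => (hp0 y).ne')
  have hfd : Differentiable ℝ f := hlog.differentiable two_ne_zero
  have hD : ContDiff ℝ 1 (fderiv ℝ f) := hlog.fderiv_right (le_refl 2)
  have hgc : Continuous g := by
    rw [hg_def]
    exact (InnerProductSpace.toDual ℝ
      (EuclideanSpace ℝ (Fin d))).symm.continuous.comp hD.continuous
  -- inner product description of fderiv of f
  have key0 : ∀ x v, fderiv ℝ f x v = inner ℝ (g x) v := by
    intro x v
    rw [hg_def]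
    exact (InnerProductSpace.toDual_symm_apply).symm
  -- conversion of integrals w.r.t. withDensity
  have hρeq : (fun x : EuclideanSpace ℝ (Fin d) => ENNReal.ofReal (p x))
      = fun x => ((Real.toNNReal (p x) : ℝ≥0) : ℝ≥0∞) := rfl
  have htm : Measurable fun x => Real.toNNReal (p x) := hpm.real_toNNReal
  have hconv : ∀ h : EuclideanSpace ℝ (Fin d) → ℝ,
      ∫ x, h x ∂(volume.withDensity fun x => ENNReal.ofReal (p x))
        = ∫ x, h x * p x := by
    intro h
    rw [hρeq, integral_withDensity_eq_integral_smul htm]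
    congr 1
    funext x
    simp [NNReal.smul_def, Real.coe_toNNReal _ (hp0 x).le, mul_comm]
  have hconvInt : ∀ h : EuclideanSpace ℝ (Fin d) → ℝ,
      Integrable h (volume.withDensity fun x => ENNReal.ofReal (p x)) ↔
        Integrable (fun x => h x * p x) volume := by
    intro h
    rw [integrable_withDensity_iff (hpm.ennreal_ofReal) (ae_of_all _ fun x => ENNReal.ofReal_lt_top)]
    simp only [ENNReal.toReal_ofReal (hp0 _).le]
  -- integrability of ‖g‖² * p
  have hG2 : Integrable (fun x => ‖g x‖ ^ 2 * p x) volume := (hconvInt _).1 hI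
  -- p is integrable with integral 1
  have hlint : ∫⁻ x, ENNReal.ofReal (p x) = 1 := by
    have := hprob.measure_univ
    rwa [withDensity_apply _ MeasurableSet.univ, setLIntegral_univ] at this
  have hp_int : Integrable p volume := by
    refine ⟨hpc.aestronglyMeasurable, ?_⟩
    rw [hasFiniteIntegral_iff_ofReal (ae_of_all _ fun x => (hp0 x).le), hlint]
    exact ENNReal.one_lt_top
  have hp_one : ∫ x, p x = 1 := by
    rw [integral_eq_lintegral_of_nonneg_ae (ae_of_all _ fun x => (hp0 x).le)
      hpc.aestronglyMeasurable, hlint, ENNReal.toReal_one]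
  -- coordinate vectors and coordinate functions of the gradient
  set e : Fin d → EuclideanSpace ℝ (Fin d) := fun i => EuclideanSpace.single i (1:ℝ) with he_def
  have hnorm_e : ∀ i, ‖e i‖ = 1 := fun i => by simp [he_def]
  set φ : Fin d → EuclideanSpace ℝ (Fin d) → ℝ := fun i x => fderiv ℝ f x (e i) with hφ_def
  have hφ_inner : ∀ i x, φ i x = inner ℝ (g x) (e i) := fun i x => key0 x (e i)
  have habs : ∀ i x, |φ i x| ≤ ‖g x‖ := by
    intro i x
    rw [hφ_inner]
    calc |inner ℝ (g x) (e i)| ≤ ‖g x‖ * ‖e i‖ := abs_real_inner_le_norm _ _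
    _ = ‖g x‖ := by rw [hnorm_e i, mul_one]
  have hφ_cd : ∀ i, ContDiff ℝ 1 (φ i) := fun i => hD.clm_apply contDiff_const
  have hφ_diff : ∀ i, Differentiable ℝ (φ i) := fun i => (hφ_cd i).differentiable one_ne_zero
  have hφc : ∀ i, Continuous (φ i) := fun i => (hφ_cd i).continuous
  have hφ'c : ∀ i, Continuous fun x => fderiv ℝ (φ i) x (e i) := fun i =>
    (ContinuousLinearMap.apply ℝ ℝ (e i)).continuous.comp
      ((hφ_cd i).continuous_fderiv one_ne_zero)
  have hφ_lip : ∀ i, LipschitzWith L (φ i) := by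
    intro i
    apply LipschitzWith.of_dist_le_mul
    intro x y
    rw [Real.dist_eq]
    have hxy : φ i x - φ i y = inner ℝ (g x - g y) (e i) := by
      rw [hφ_inner, hφ_inner, inner_sub_left]
    rw [hxy]
    calc |inner ℝ (g x - g y) (e i)| ≤ ‖g x - g y‖ * ‖e i‖ := abs_real_inner_le_norm _ _
    _ = dist (g x) (g y) := by rw [hnorm_e i, mul_one, dist_eq_norm]
    _ ≤ L * dist x y := hLip.dist_le_mul x y
  have hφ'_le : ∀ i x, |fderiv ℝ (φ i) x (e i)| ≤ (L:ℝ) := by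
    intro i x
    calc |fderiv ℝ (φ i) x (e i)| ≤ ‖fderiv ℝ (φ i) x‖ * ‖e i‖ :=
      (fderiv ℝ (φ i) x).le_opNorm (e i)
    _ = ‖fderiv ℝ (φ i) x‖ := by rw [hnorm_e i, mul_one]
    _ ≤ (L:ℝ) := norm_fderiv_le_of_lipschitz ℝ (hφ_lip i)
  have hpder : ∀ i x, fderiv ℝ p x (e i) = p x * φ i x := by
    intro i x
    have hlp : HasFDerivAt f ((p x)⁻¹ • fderiv ℝ p x) x :=
      ((hpd x).hasFDerivAt).log (hp0 x).ne'
    have hfx : fderiv ℝ f x = (p x)⁻¹ • fderiv ℝ p x := hlp.fderiv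
    rw [hφ_def]
    simp only [hfx, ContinuousLinearMap.coe_smul', Pi.smul_apply, smul_eq_mul]
    field_simp [(hp0 x).ne']
  -- integrability of the three products
  have h1 : ∀ i, Integrable (fun x => p x * (φ i x)^2) volume := by
    intro i
    apply hG2.mono' ((hpc.mul (((hφc i).pow 2))).aestronglyMeasurable)
    refine ae_of_all _ fun x => ?_
    rw [Real.norm_eq_abs, Pi.mul_apply, abs_mul, abs_of_nonneg (hp0 x).le, Pi.pow_apply, abs_pow, sq_abs]
    have h := habs i x
    have h0 := abs_nonneg (φ i x)
    have hsq : φ i x ^ 2 ≤ ‖g x‖ ^ 2 := by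
      rw [← sq_abs]
      exact pow_le_pow_left₀ h0 h 2
    calc p x * φ i x ^ 2 ≤ p x * ‖g x‖ ^ 2 := mul_le_mul_of_nonneg_left hsq (hp0 x).le
    _ = ‖g x‖ ^ 2 * p x := mul_comm _ _
  have h2 : ∀ i, Integrable (fun x => p x * fderiv ℝ (φ i) x (e i)) volume := by
    intro i
    apply (hp_int.const_mul (L:ℝ)).mono' ((hpc.mul (hφ'c i)).aestronglyMeasurable)
    refine ae_of_all _ fun x => ?_
    rw [Real.norm_eq_abs, Pi.mul_apply, abs_mul, abs_of_nonneg (hp0 x).le, mul_comm ((L:ℝ)) (p x)]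
    exact mul_le_mul_of_nonneg_left (hφ'_le i x) (hp0 x).le
  have h3 : ∀ i, Integrable (fun x => p x * φ i x) volume := by
    intro i
    apply (hp_int.add hG2).mono' ((hpc.mul (hφc i)).aestronglyMeasurable)
    refine ae_of_all _ fun x => ?_
    simp only [Pi.add_apply]
    rw [Real.norm_eq_abs, Pi.mul_apply, abs_mul, abs_of_nonneg (hp0 x).le]
    have h := habs i x
    have h0 := abs_nonneg (φ i x)
    nlinarith [norm_nonneg (g x), (hp0 x).le, sq_nonneg (‖g x‖ - 1), mul_le_mul_of_nonneg_left h (hp0 x).le]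
  -- integration by parts
  have ibp : ∀ i, ∫ x, p x * (φ i x)^2 ≤ (L:ℝ) := by
    intro i
    have h1' : Integrable (fun x => fderiv ℝ p x (e i) * φ i x) volume := by
      have heq : (fun x => fderiv ℝ p x (e i) * φ i x) = fun x => p x * (φ i x)^2 := by
        funext x; rw [hpder]; ring
      rw [heq]; exact h1 i
    have key := integral_mul_fderiv_eq_neg_fderiv_mul_of_integrable
      (h1' ) (h2 i) (h3 i) (fun x _ => hpd x) (fun x _ => hφ_diff i x)
    have heq2 : ∫ x, p x * (φ i x)^2 = - ∫ x, p x * fderiv ℝ (φ i) x (e i) := by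
      rw [key]
      rw [neg_neg]
      congr 1
      funext x
      rw [hpder]; ring
    rw [heq2]
    have hmono : - ∫ x, p x * fderiv ℝ (φ i) x (e i) = ∫ x, -(p x * fderiv ℝ (φ i) x (e i)) := by
      rw [integral_neg]
    rw [hmono]
    calc ∫ x, -(p x * fderiv ℝ (φ i) x (e i)) ≤ ∫ x, (L:ℝ) * p x := by
          apply integral_mono ((h2 i).neg) (hp_int.const_mul _)
          intro x
          have h := hφ'_le i x
          have hpx := (hp0 x).le
          rw [abs_le] at h
          simp only [Pi.neg_apply]
          nlinarith [h.1]
    _ = (L:ℝ) := by rw [integral_const_mul, hp_one, mul_one]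
  -- sum up over coordinates
  rw [hconv]
  have hsum : ∀ x, ‖g x‖^2 * p x = ∑ i, p x * (φ i x)^2 := by
    intro x
    have hns : ‖g x‖^2 = ∑ i, (φ i x)^2 := by
      have := EuclideanSpace.norm_eq (g x)
      rw [this, Real.sq_sqrt (Finset.sum_nonneg fun i _ => sq_nonneg _)]
      congr 1
      funext i
      rw [hφ_inner, he_def]
      simp [EuclideanSpace.inner_single_right, Real.norm_eq_abs, sq_abs]
    rw [hns, Finset.sum_mul]
    congr 1; funext i; ring
  calc ∫ x, ‖g x‖^2 * p x = ∑ i, ∫ x, p x * (φ i x)^2 := by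
        rw [← integral_finset_sum _ (fun i _ => h1 i)]
        congr 1; funext x; exact hsum x
  _ ≤ ∑ _i : Fin d, (L:ℝ) := Finset.sum_le_sum fun i _ => ibp i
  _ = (d:ℝ) * L := by simp [mul_comm]

theorem stmt10 :
    ∃ C > (0 : ℝ), ∀ (d : ℕ) (μ : Measure (EuclideanSpace ℝ (Fin d)))
      [IsProbabilityMeasure μ] (p : EuclideanSpace ℝ (Fin d) → ℝ) (L : ℝ≥0),
      μ = volume.withDensity (fun x => ENNReal.ofReal (p x)) →
      (∀ x, 0 < p x) →
      ContDiff ℝ 2 p →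
      LipschitzWith L (fun x => gradient (fun y => Real.log (p y)) x) →
      Integrable (fun x => ‖x‖ ^ 2) μ →
      Integrable (fun x => ‖gradient (fun y => Real.log (p y)) x‖ ^ 2) μ →
      (∫ x, ‖gradient (fun y => Real.log (p y / gaussDensity d y)) x‖ ^ 2 ∂μ)
        ≤ C * ((d : ℝ) * L + ∫ x, ‖x‖ ^ 2 ∂μ) := by
  refine ⟨2, by norm_num, ?_⟩
  intro d μ hμprob p L hμ hp0 hp hLip hM2 hI
  subst hμ
  set g : EuclideanSpace ℝ (Fin d) → EuclideanSpace ℝ (Fin d) :=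
    fun x => gradient (fun y => Real.log (p y)) x with hg_def
  have hgradeq : ∀ x, gradient (fun y => Real.log (p y / gaussDensity d y)) x = g x + x :=
    fun x => grad_log_div_gauss hp0 hp x
  have hgc : Continuous g := by
    have hlog : ContDiff ℝ 2 fun y => Real.log (p y) := hp.log (fun y => (hp0 y).ne')
    have hD : ContDiff ℝ 1 (fderiv ℝ fun y => Real.log (p y)) := hlog.fderiv_right (le_refl 2)
    exact (InnerProductSpace.toDual ℝ
      (EuclideanSpace ℝ (Fin d))).symm.continuous.comp hD.continuous
  have key : ∀ x : EuclideanSpace ℝ (Fin d),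
      ‖g x + x‖ ^ 2 ≤ 2 * ‖g x‖ ^ 2 + 2 * ‖x‖ ^ 2 := by
    intro x
    have h := norm_add_le (g x) x
    have h2 : ‖g x + x‖ ^ 2 ≤ (‖g x‖ + ‖x‖) ^ 2 := by
      apply pow_le_pow_left₀ (norm_nonneg _) h
    nlinarith [sq_nonneg (‖g x‖ - ‖x‖)]
  have hsum_int : Integrable (fun x => 2 * ‖g x‖ ^ 2 + 2 * ‖x‖ ^ 2)
      (volume.withDensity fun x => ENNReal.ofReal (p x)) :=
    (hI.const_mul 2).add (hM2.const_mul 2)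
  have hLHS_int : Integrable (fun x => ‖g x + x‖ ^ 2)
      (volume.withDensity fun x => ENNReal.ofReal (p x)) := by
    apply hsum_int.mono' (((hgc.add continuous_id).norm.pow 2).aestronglyMeasurable)
    refine ae_of_all _ fun x => ?_
    rw [Real.norm_eq_abs, abs_of_nonneg (sq_nonneg _)]
    exact key x
  have hC := int_grad_sq_le hp0 hp hLip hμprob hI
  have hM2nonneg : (0:ℝ) ≤ ∫ x, ‖x‖ ^ 2 ∂(volume.withDensity fun x => ENNReal.ofReal (p x)) :=
    integral_nonneg fun x => sq_nonneg _
  calc ∫ x, ‖gradient (fun y => Real.log (p y / gaussDensity d y)) x‖ ^ 2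
        ∂(volume.withDensity fun x => ENNReal.ofReal (p x))
      = ∫ x, ‖g x + x‖ ^ 2 ∂(volume.withDensity fun x => ENNReal.ofReal (p x)) := by
        congr 1; funext x; rw [hgradeq x]
    _ ≤ ∫ x, (2 * ‖g x‖ ^ 2 + 2 * ‖x‖ ^ 2)
          ∂(volume.withDensity fun x => ENNReal.ofReal (p x)) :=
        integral_mono hLHS_int hsum_int key
    _ = 2 * (∫ x, ‖g x‖ ^ 2 ∂(volume.withDensity fun x => ENNReal.ofReal (p x)))
          + 2 * ∫ x, ‖x‖ ^ 2 ∂(volume.withDensity fun x => ENNReal.ofReal (p x)) := by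
        rw [integral_add (hI.const_mul 2) (hM2.const_mul 2), integral_const_mul,
          integral_const_mul]
    _ ≤ 2 * ((d : ℝ) * L)
          + 2 * ∫ x, ‖x‖ ^ 2 ∂(volume.withDensity fun x => ENNReal.ofReal (p x)) := by
        have := hC
        linarith
    _ = 2 * ((d : ℝ) * L + ∫ x, ‖x‖ ^ 2
          ∂(volume.withDensity fun x => ENNReal.ofReal (p x))) := by ring
end
end

section
/- Let A be the 2d×2d real block matrix A = [[0, Id_d],[−Id_d, 2·Id_d]]. There exists a universal constant C > 0 (independent of d) such that for all t ≥ 0 the operator norm satisfies ‖A · exp(−tA)‖ ≤ C e^{−t/2}; in particular ‖A · exp(−tA)‖ ≤ C' (1+t) e^{−t} for some universal C' > 0. -/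
open Matrix
noncomputable section

/-- The drift matrix `A = [[0, Id_d], [−Id_d, 2·Id_d]]` of the kinetic OU process,
as a `2d × 2d` real matrix indexed by `Fin d ⊕ Fin d`. -/
def kinA (d : ℕ) : Matrix (Fin d ⊕ Fin d) (Fin d ⊕ Fin d) ℝ :=
  Matrix.fromBlocks 0 1 (-1) (2 • (1 : Matrix (Fin d) (Fin d) ℝ))

/-- The operator norm of a square real matrix, acting on Euclidean space. -/
def opNorm (d : ℕ) (M : Matrix (Fin d ⊕ Fin d) (Fin d ⊕ Fin d) ℝ) : ℝ :=
  ‖Matrix.toEuclideanCLM (𝕜 := ℝ) M‖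

lemma myexp_sq_zero {𝔸 : Type*} [NormedRing 𝔸] [NormedAlgebra ℝ 𝔸] [CompleteSpace 𝔸]
    (x : 𝔸) (h : x * x = 0) : NormedSpace.exp x = 1 + x := by
  have hpow : ∀ n, n ∉ ({0, 1} : Finset ℕ) → ((n.factorial : ℝ))⁻¹ • x ^ n = 0 := by
    intro n hn
    simp only [Finset.mem_insert, Finset.mem_singleton, not_or] at hn
    have h2 : 2 ≤ n := by omega
    obtain ⟨m, rfl⟩ := Nat.exists_eq_add_of_le h2
    rw [pow_add, pow_two, h, zero_mul, smul_zero]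
  simp only [NormedSpace.exp_eq_tsum ℝ]
  rw [tsum_eq_sum hpow]
  simp [Finset.sum_pair (show (0:ℕ) ≠ 1 by norm_num)]

lemma kinA_sub_one (d : ℕ) :
    kinA d - 1 = Matrix.fromBlocks (-1) 1 (-1) (1 : Matrix (Fin d) (Fin d) ℝ) := by
  rw [kinA, ← Matrix.fromBlocks_one, sub_eq_add_neg, Matrix.fromBlocks_neg,
    Matrix.fromBlocks_add]
  congr 1 <;> simp [two_smul] <;> abel

lemma Nsq (d : ℕ) : (kinA d - 1) * (kinA d - 1) = 0 := by
  rw [kinA_sub_one, Matrix.fromBlocks_multiply]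
  simp

lemma myexp_smul_one {𝔸 : Type*} [NormedRing 𝔸] [NormedAlgebra ℝ 𝔸] [CompleteSpace 𝔸]
    (r : ℝ) : NormedSpace.exp (r • (1 : 𝔸)) = Real.exp r • 1 := by
  rw [← Algebra.algebraMap_eq_smul_one, ← NormedSpace.algebraMap_exp_comm,
    Real.exp_eq_exp_ℝ, Algebra.algebraMap_eq_smul_one]

set_option maxHeartbeats 1000000 in
lemma exp_kinA (d : ℕ) (t : ℝ) :
    kinA d * NormedSpace.exp ((-t) • kinA d)
      = Real.exp (-t) • (1 + (1 - t) • (kinA d - 1)) := by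
  obtain ⟨N, hNdef⟩ : ∃ N, N = kinA d - 1 := ⟨_, rfl⟩
  rw [← hNdef]
  have hA : kinA d = 1 + N := by rw [hNdef]; abel
  have hNsq : N * N = 0 := by rw [hNdef]; exact Nsq d
  have hsmul : (-t) • kinA d = (-t) • (1 : Matrix (Fin d ⊕ Fin d) (Fin d ⊕ Fin d) ℝ) + (-t) • N := by
    rw [hA, smul_add]
  have hcomm : Commute ((-t) • (1 : Matrix (Fin d ⊕ Fin d) (Fin d ⊕ Fin d) ℝ)) ((-t) • N) :=
    ((Commute.one_left N).smul_left (-t)).smul_right (-t)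
  have h1 : NormedSpace.exp ((-t) • (1 : Matrix (Fin d ⊕ Fin d) (Fin d ⊕ Fin d) ℝ))
      = Real.exp (-t) • 1 := by
    letI : SeminormedRing (Matrix (Fin d ⊕ Fin d) (Fin d ⊕ Fin d) ℝ) := Matrix.linftyOpSemiNormedRing
    letI : NormedRing (Matrix (Fin d ⊕ Fin d) (Fin d ⊕ Fin d) ℝ) := Matrix.linftyOpNormedRing
    letI : NormedAlgebra ℝ (Matrix (Fin d ⊕ Fin d) (Fin d ⊕ Fin d) ℝ) := Matrix.linftyOpNormedAlgebra
    exact myexp_smul_one (-t)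
  have h2 : NormedSpace.exp ((-t) • N) = 1 + (-t) • N := by
    letI : SeminormedRing (Matrix (Fin d ⊕ Fin d) (Fin d ⊕ Fin d) ℝ) := Matrix.linftyOpSemiNormedRing
    letI : NormedRing (Matrix (Fin d ⊕ Fin d) (Fin d ⊕ Fin d) ℝ) := Matrix.linftyOpNormedRing
    letI : NormedAlgebra ℝ (Matrix (Fin d ⊕ Fin d) (Fin d ⊕ Fin d) ℝ) := Matrix.linftyOpNormedAlgebra
    exact myexp_sq_zero _ (by rw [smul_mul_smul_comm, hNsq, smul_zero])
  rw [hsmul, Matrix.exp_add_of_commute _ _ hcomm, h1, h2, hA]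
  rw [smul_mul_assoc, one_mul, mul_smul_comm]
  have h3 : N * ((-t) • N) = 0 := by rw [mul_smul_comm, hNsq, smul_zero]
  congr 1
  rw [add_mul, one_mul, mul_add, mul_one, h3]
  module

lemma normN (d : ℕ) : ‖Matrix.toEuclideanCLM (n := Fin d ⊕ Fin d) (𝕜 := ℝ) (kinA d - 1)‖ ≤ 2 := by
  refine ContinuousLinearMap.opNorm_le_bound _ (by norm_num) fun x => ?_
  set y := Matrix.toEuclideanCLM (n := Fin d ⊕ Fin d) (𝕜 := ℝ) (kinA d - 1) x with hy
  have hcoord : ∀ k, y k = (kinA d - 1).mulVec (⇑(WithLp.equiv 2 _) x) k := by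
    intro k
    rw [hy]
    rfl
  have hmv : ∀ i : Fin d,
      ((kinA d - 1).mulVec (⇑(WithLp.equiv 2 _) x) (Sum.inl i)
        = x (Sum.inr i) - x (Sum.inl i)) ∧
      ((kinA d - 1).mulVec (⇑(WithLp.equiv 2 _) x) (Sum.inr i)
        = x (Sum.inr i) - x (Sum.inl i)) := by
    intro i
    rw [kinA_sub_one]
    constructor <;>
      simp [Matrix.mulVec, dotProduct, Fintype.sum_sum_type, Matrix.fromBlocks,
        Matrix.one_apply, Finset.sum_ite_eq, sub_eq_add_neg, add_comm] <;> ring_nf <;>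
      simp [Finset.mul_sum]
  have hsum : ∑ k, ‖y k‖ ^ 2 ≤ 4 * ∑ k, ‖x k‖ ^ 2 := by
    rw [Fintype.sum_sum_type (fun k => ‖y k‖ ^ 2), Fintype.sum_sum_type (fun k => ‖x k‖ ^ 2)]
    have hyl : ∀ i : Fin d, ‖y (Sum.inl i)‖ ^ 2 = (x (Sum.inr i) - x (Sum.inl i)) ^ 2 := by
      intro i; rw [hcoord, (hmv i).1, Real.norm_eq_abs, sq_abs]
    have hyr : ∀ i : Fin d, ‖y (Sum.inr i)‖ ^ 2 = (x (Sum.inr i) - x (Sum.inl i)) ^ 2 := by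
      intro i; rw [hcoord, (hmv i).2, Real.norm_eq_abs, sq_abs]
    have hb1 : ∑ i : Fin d, ‖y (Sum.inl i)‖ ^ 2
        ≤ ∑ i : Fin d, (2 * ‖x (Sum.inl i)‖ ^ 2 + 2 * ‖x (Sum.inr i)‖ ^ 2) := by
      refine Finset.sum_le_sum fun i _ => ?_
      rw [hyl i, Real.norm_eq_abs, Real.norm_eq_abs, sq_abs, sq_abs]
      nlinarith [sq_nonneg (x (Sum.inl i) + x (Sum.inr i))]
    have hb2 : ∑ i : Fin d, ‖y (Sum.inr i)‖ ^ 2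
        ≤ ∑ i : Fin d, (2 * ‖x (Sum.inl i)‖ ^ 2 + 2 * ‖x (Sum.inr i)‖ ^ 2) := by
      refine Finset.sum_le_sum fun i _ => ?_
      rw [hyr i, Real.norm_eq_abs, Real.norm_eq_abs, sq_abs, sq_abs]
      nlinarith [sq_nonneg (x (Sum.inl i) + x (Sum.inr i))]
    have hsplit : ∑ i : Fin d, (2 * ‖x (Sum.inl i)‖ ^ 2 + 2 * ‖x (Sum.inr i)‖ ^ 2)
        = 2 * ∑ i : Fin d, ‖x (Sum.inl i)‖ ^ 2 + 2 * ∑ i : Fin d, ‖x (Sum.inr i)‖ ^ 2 := by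
      rw [Finset.sum_add_distrib, Finset.mul_sum, Finset.mul_sum]
    rw [hsplit] at hb1 hb2
    linarith
  rw [EuclideanSpace.norm_eq y, EuclideanSpace.norm_eq x]
  have h4 : Real.sqrt (∑ k, ‖y k‖ ^ 2) ≤ Real.sqrt (4 * ∑ k, ‖x k‖ ^ 2) :=
    Real.sqrt_le_sqrt hsum
  have h5 : Real.sqrt (4 * ∑ k, ‖x k‖ ^ 2) = 2 * Real.sqrt (∑ k, ‖x k‖ ^ 2) := by
    rw [show (4 : ℝ) = 2 ^ 2 by norm_num, Real.sqrt_mul (by positivity),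
      Real.sqrt_sq (by norm_num)]
  rw [h5] at h4
  exact h4

set_option synthInstance.maxHeartbeats 1000000 in
set_option maxHeartbeats 1000000 in
lemma opNorm_bound (d : ℕ) (t : ℝ) (ht : 0 ≤ t) :
    opNorm d (kinA d * NormedSpace.exp ((-t) • kinA d)) ≤ (3 + 2 * t) * Real.exp (-t) := by
  rw [opNorm, exp_kinA, _root_.map_smul, map_add, _root_.map_one, _root_.map_smul]
  have hN := normN d
  set T : EuclideanSpace ℝ (Fin d ⊕ Fin d) →L[ℝ] EuclideanSpace ℝ (Fin d ⊕ Fin d) :=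
    Matrix.toEuclideanCLM (n := Fin d ⊕ Fin d) (𝕜 := ℝ) (kinA d - 1) with hT
  calc ‖Real.exp (-t) • (1 + (1 - t) • T)‖
      = Real.exp (-t) * ‖1 + (1 - t) • T‖ := by
        have := norm_smul (Real.exp (-t)) (1 + (1 - t) • T)
        rw [Real.norm_eq_abs, abs_of_pos (Real.exp_pos _)] at this
        exact this
    _ ≤ Real.exp (-t) * (‖(1 : EuclideanSpace ℝ (Fin d ⊕ Fin d) →L[ℝ] EuclideanSpace ℝ (Fin d ⊕ Fin d))‖
          + |1 - t| * ‖T‖) := by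
        refine mul_le_mul_of_nonneg_left ?_ (Real.exp_pos _).le
        refine (norm_add_le _ _).trans ?_
        gcongr
        have := norm_smul (1 - t) T
        rw [Real.norm_eq_abs] at this
        exact this.le
    _ ≤ Real.exp (-t) * (1 + |1 - t| * 2) := by
        refine mul_le_mul_of_nonneg_left ?_ (Real.exp_pos _).le
        gcongr
        exact ContinuousLinearMap.norm_id_le
    _ ≤ (3 + 2 * t) * Real.exp (-t) := by
        rw [mul_comm]
        refine mul_le_mul_of_nonneg_right ?_ (Real.exp_pos _).le
        rcases abs_cases (1 - t) with ⟨h, _⟩ | ⟨h, _⟩ <;> rw [h] <;> linarith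

theorem stmt11 :
    (∃ C > (0 : ℝ), ∀ (d : ℕ) (t : ℝ), 0 ≤ t →
      opNorm d (kinA d * NormedSpace.exp ((-t) • kinA d)) ≤ C * Real.exp (-t / 2)) ∧
    (∃ C' > (0 : ℝ), ∀ (d : ℕ) (t : ℝ), 0 ≤ t →
      opNorm d (kinA d * NormedSpace.exp ((-t) • kinA d)) ≤ C' * (1 + t) * Real.exp (-t)) := by
  constructor
  · refine ⟨5, by norm_num, fun d t ht => ?_⟩
    refine (opNorm_bound d t ht).trans ?_
    have hexp : t / 2 + 1 ≤ Real.exp (t / 2) := Real.add_one_le_exp _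
    have h1 : 3 + 2 * t ≤ 5 * Real.exp (t / 2) := by nlinarith
    have h2 : Real.exp (t / 2) * Real.exp (-t) = Real.exp (-t / 2) := by
      rw [← Real.exp_add]; ring_nf
    calc (3 + 2 * t) * Real.exp (-t) ≤ 5 * Real.exp (t / 2) * Real.exp (-t) := by
          exact mul_le_mul_of_nonneg_right h1 (Real.exp_pos _).le
      _ = 5 * Real.exp (-t / 2) := by rw [mul_assoc, h2]
  · refine ⟨3, by norm_num, fun d t ht => ?_⟩
    refine (opNorm_bound d t ht).trans ?_
    have : 3 + 2 * t ≤ 3 * (1 + t) := by linarith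
    calc (3 + 2 * t) * Real.exp (-t) ≤ 3 * (1 + t) * Real.exp (-t) :=
          mul_le_mul_of_nonneg_right this (Real.exp_pos _).le
      _ = 3 * (1 + t) * Real.exp (-t) := rfl
end
end
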